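/- Let (l_n)_{n≥0} be a sequence of positive reals with l_{n+1} < l_n/2 for all n, and let E be the generalized Cantor set in the unit circle built from these lengths: start with a closed arc of length l₀; at stage n there are 2ⁿ pairwise disjoint closed arcs each of length l_n, and each stage-n arc contains exactly two stage-(n+1) arcs of length l_{n+1}, one at each end of it (obtained by removing an open arc from its center); E is the intersection over n of the unions of the stage-n arcs. Let σ be the Cantor–Lebesgue probability measure on E, i.e., the probability measure assigning mass 2^{−n} to each stage-n arc. Let φ be an increasing function with φ(l_n) = 2^{−n} for all n. Then for every arc I of the unit circle with |I| < l₀, σ(I) ≤ 4·φ(|I|). -/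
import Mathlib

open MeasureTheory Complex Set

noncomputable section

def circleArc (θ ℓ : ℝ) : Set ℂ :=
  (fun α : ℝ => Complex.exp (α * Complex.I)) '' Set.Icc θ (θ + ℓ)

def cantorLeft (l : ℕ → ℝ) : List Bool → ℝ
  | [] => 0
  | b :: s => cantorLeft l s + if b then l s.length - l (s.length + 1) else 0

def cantorArc (l : ℕ → ℝ) (s : List Bool) : Set ℂ :=
  circleArc (cantorLeft l s) (l s.length)

lemma expi_eq_iff {x y : ℝ} :
    Complex.exp (x * Complex.I) = Complex.exp (y * Complex.I) ↔
      ∃ k : ℤ, x = y + 2 * Real.pi * k := by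
  rw [Complex.exp_eq_exp_iff_exists_int]
  constructor
  · rintro ⟨n, h⟩
    refine ⟨n, ?_⟩
    have h2 : (x : ℂ) * Complex.I = ((y + 2 * Real.pi * n : ℝ) : ℂ) * Complex.I := by
      push_cast
      linear_combination h
    have := mul_right_cancel₀ Complex.I_ne_zero h2
    exact_mod_cast this
  · rintro ⟨k, h⟩
    exact ⟨k, by push_cast [h]; ring⟩

lemma mem_circleArc_iff {θ ℓ x : ℝ} :
    Complex.exp (x * Complex.I) ∈ circleArc θ ℓ ↔
      ∃ k : ℤ, x + 2 * Real.pi * k ∈ Icc θ (θ + ℓ) := by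
  constructor
  · rintro ⟨α, hα, h⟩
    obtain ⟨k, hk⟩ := expi_eq_iff.mp h
    exact ⟨k, by rw [← hk]; exact hα⟩
  · rintro ⟨k, hk⟩
    exact ⟨x + 2 * Real.pi * k, hk, expi_eq_iff.mpr ⟨k, by push_cast; ring⟩⟩

lemma circleArc_measurable (θ ℓ : ℝ) : MeasurableSet (circleArc θ ℓ) := by
  have : Continuous fun α : ℝ => Complex.exp (α * Complex.I) := by continuity
  exact ((isCompact_Icc.image this).isClosed).measurableSet

lemma e_zero : Complex.exp ((0 : ℝ) * Complex.I) = 1 := by simp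

lemma e_two_pi : Complex.exp ((2 * Real.pi : ℝ) * Complex.I) = 1 := by
  push_cast
  exact Complex.exp_two_pi_mul_I

/-- two points of `[0, 2π]` with the same exponential are either equal or the image is 1 -/
lemma exp_eq_one_of_ne {x y : ℝ} (hx : x ∈ Icc 0 (2 * Real.pi)) (hy : y ∈ Icc 0 (2 * Real.pi))
    (hne : x ≠ y) (heq : Complex.exp (x * Complex.I) = Complex.exp (y * Complex.I)) :
    Complex.exp (x * Complex.I) = 1 := by
  obtain ⟨k, hk⟩ := expi_eq_iff.mp heq
  have hπ := Real.pi_pos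
  rcases lt_trichotomy k 0 with h | h | h
  · have hk1 : (k : ℝ) ≤ -1 := by exact_mod_cast (by omega : k ≤ -1)
    have hx0 : x = 0 := le_antisymm (by nlinarith [hy.1, hx.2, hy.2]) hx.1
    rw [hx0]; exact e_zero
  · exact absurd (by rw [hk, h]; push_cast; ring) hne
  · have hk1 : (1 : ℝ) ≤ (k : ℝ) := by exact_mod_cast h
    have hy0 : y = 0 := le_antisymm (by nlinarith [hx.2, hy.1]) hy.1
    rw [heq, hy0]; exact e_zero

section cantor

variable {l : ℕ → ℝ} (hlpos : ∀ n, 0 < l n) (hl : ∀ n, l (n + 1) < l n / 2)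

include hlpos hl

lemma l_succ_lt (n : ℕ) : l (n + 1) < l n := lt_of_lt_of_le (hl n) (by linarith [hlpos n])

lemma l_anti : ∀ {n m : ℕ}, n ≤ m → l m ≤ l n := by
  intro n m h
  exact antitone_nat_of_succ_le (fun k => (l_succ_lt hlpos hl k).le) h

lemma cantorLeft_child (b : Bool) (s : List Bool) :
    cantorLeft l s ≤ cantorLeft l (b :: s) ∧
      cantorLeft l (b :: s) + l (s.length + 1) ≤ cantorLeft l s + l s.length := by
  have h1 := l_succ_lt hlpos hl s.length
  have h2 := hlpos (s.length + 1)
  cases b <;> simp [cantorLeft] <;>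
    first
      | (constructor <;> linarith)
      | linarith

lemma cantorLeft_bounds : ∀ s : List Bool,
    0 ≤ cantorLeft l s ∧ cantorLeft l s + l s.length ≤ l 0 := by
  intro s
  induction s with
  | nil => simp [cantorLeft]
  | cons b s ih =>
    have h := cantorLeft_child hlpos hl b s
    exact ⟨le_trans ih.1 h.1, by have := ih.2; simp only [List.length_cons]; linarith [h.2]⟩

/-- strict separation of the angle intervals of distinct same-stage arcs -/
lemma cantor_sep : ∀ s t : List Bool, s.length = t.length → s ≠ t →
    cantorLeft l s + l s.length < cantorLeft l t ∨
      cantorLeft l t + l t.length < cantorLeft l s := by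
  intro s
  induction s with
  | nil =>
    intro t hlen hne
    exact absurd (List.length_eq_zero_iff.mp hlen.symm).symm hne
  | cons b s ih =>
    intro t hlen hne
    cases t with
    | nil => simp at hlen
    | cons c t =>
      simp only [List.length_cons, Nat.succ_inj] at hlen
      by_cases hst : s = t
      · subst hst
        have hbc : b ≠ c := fun h => hne (by rw [h])
        have hg := hl s.length
        have hp := hlpos (s.length + 1)
        have hx : cantorLeft l (false :: s) = cantorLeft l s := by simp [cantorLeft]
        have hy : cantorLeft l (true :: s) =
            cantorLeft l s + (l s.length - l (s.length + 1)) := by simp [cantorLeft]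
        cases b <;> cases c <;> simp only [List.length_cons] <;>
          first
            | exact absurd rfl hbc
            | (left; rw [hx, hy]; linarith)
            | (right; rw [hx, hy]; linarith)
      · have hsep := ih t hlen hst
        have hcs := cantorLeft_child hlpos hl b s
        have hct := cantorLeft_child hlpos hl c t
        rcases hsep with h | h
        · left
          simp only [List.length_cons]
          rw [hlen] at *
          linarith [hcs.1, hcs.2, hct.1, hct.2]
        · right
          simp only [List.length_cons]
          rw [hlen] at *
          linarith [hcs.1, hcs.2, hct.1, hct.2]

end cantor

section cantor2

variable {l : ℕ → ℝ} (hlpos : ∀ n, 0 < l n) (hl : ∀ n, l (n + 1) < l n / 2)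
  (hl0 : l 0 ≤ 2 * Real.pi)

include hlpos hl hl0

lemma cantorArc_inter_subset {s t : List Bool} (hlen : s.length = t.length) (hne : s ≠ t) :
    cantorArc l s ∩ cantorArc l t ⊆ {1} := by
  rintro z ⟨⟨x, hx, hxz⟩, ⟨y, hy, hyz⟩⟩
  have hbs := cantorLeft_bounds hlpos hl s
  have hbt := cantorLeft_bounds hlpos hl t
  have hxI : x ∈ Icc 0 (2 * Real.pi) := ⟨le_trans hbs.1 hx.1, le_trans hx.2 (le_trans hbs.2 hl0)⟩
  have hyI : y ∈ Icc 0 (2 * Real.pi) := ⟨le_trans hbt.1 hy.1, le_trans hy.2 (le_trans hbt.2 hl0)⟩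
  have hxy : x ≠ y := by
    rcases cantor_sep hlpos hl s t hlen hne with h | h
    · intro he; subst he
      exact absurd (lt_of_le_of_lt hx.2 (lt_of_lt_of_le h hy.1)) (lt_irrefl x)
    · intro he; subst he
      exact absurd (lt_of_le_of_lt hy.2 (lt_of_lt_of_le h hx.1)) (lt_irrefl x)
  have := exp_eq_one_of_ne hxI hyI hxy (hxz.trans hyz.symm)
  simp only [mem_singleton_iff]
  rw [← hxz]; exact this

lemma cantorArc_child_subset (b : Bool) (s : List Bool) :
    cantorArc l (b :: s) ⊆ cantorArc l s := by
  have h := cantorLeft_child hlpos hl b s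
  apply image_mono
  apply Icc_subset_Icc h.1
  simpa using h.2

lemma one_mem_leftmost (n : ℕ) : (1 : ℂ) ∈ cantorArc l (List.replicate n false) := by
  have hcl : cantorLeft l (List.replicate n false) = 0 := by
    induction n with
    | zero => simp [cantorLeft]
    | succ n ih => simpa [cantorLeft, List.replicate_succ] using ih
  refine ⟨0, ?_, e_zero⟩
  rw [hcl]
  exact ⟨le_refl 0, by simpa using (hlpos _).le⟩

/-- classification of arcs containing the point 1 -/
lemma one_mem_classify {s : List Bool} (h1 : (1 : ℂ) ∈ cantorArc l s) :
    cantorLeft l s = 0 ∨ cantorLeft l s + l s.length = 2 * Real.pi := by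
  have := mem_circleArc_iff.mp (show Complex.exp ((0 : ℝ) * Complex.I) ∈ cantorArc l s by
    rw [e_zero]; exact h1)
  obtain ⟨k, hk⟩ := this
  simp only [zero_add] at hk
  have hb := cantorLeft_bounds hlpos hl s
  have hπ := Real.pi_pos
  have hk0 : (0 : ℝ) ≤ 2 * Real.pi * k := le_trans hb.1 hk.1
  have hk2 : 2 * Real.pi * k ≤ 2 * Real.pi := le_trans hk.2 (le_trans hb.2 hl0)
  have hknn : (0 : ℤ) ≤ k := by
    by_contra h
    have : (k : ℝ) ≤ -1 := by exact_mod_cast (by omega : k ≤ -1)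
    nlinarith
  have hkle : k ≤ 1 := by
    by_contra h
    have : (2 : ℝ) ≤ (k : ℝ) := by exact_mod_cast (by omega : (2 : ℤ) ≤ k)
    nlinarith
  interval_cases k
  · left
    simp only [Int.cast_zero, mul_zero] at hk
    exact le_antisymm hk.1 hb.1
  · right
    simp only [Int.cast_one, mul_one] at hk
    exact le_antisymm (le_trans hb.2 hl0) hk.2

end cantor2

lemma arc_anchor {a L θ ℓ : ℝ} (hL : ℓ ≤ L)
    (h : (circleArc a L ∩ circleArc θ ℓ).Nonempty) :
    Complex.exp ((θ : ℝ) * Complex.I) ∈ circleArc a L ∨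
      Complex.exp ((θ + ℓ : ℝ) * Complex.I) ∈ circleArc a L := by
  obtain ⟨z, ⟨x, hx, hxz⟩, ⟨y, hy, hyz⟩⟩ := h
  obtain ⟨k, hk⟩ := expi_eq_iff.mp (hxz.trans hyz.symm)
  by_cases hc : a ≤ θ + 2 * Real.pi * k
  · left
    exact mem_circleArc_iff.mpr ⟨k, hc, by linarith [hk, hy.1, hx.2]⟩
  · right
    push_neg at hc
    refine mem_circleArc_iff.mpr ⟨k, ?_, ?_⟩
    · linarith [hk, hy.2, hx.1]
    · linarith

lemma right_null {a L θ ℓ : ℝ} (haL : a + L = 2 * Real.pi) (hL : L < Real.pi)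
    (hℓ : ℓ < Real.pi) (hθ : ∃ k : ℤ, θ = 2 * Real.pi * k) :
    circleArc a L ∩ circleArc θ ℓ ⊆ {1} := by
  rintro z ⟨⟨x, hx, hxz⟩, ⟨y, hy, hyz⟩⟩
  obtain ⟨j, hj⟩ := expi_eq_iff.mp (hxz.trans hyz.symm)
  obtain ⟨k, hk⟩ := hθ
  have hπ := Real.pi_pos
  rcases le_or_gt (k + j) 0 with h | h
  · exfalso
    have : ((k + j : ℤ) : ℝ) ≤ 0 := by exact_mod_cast h
    have h1 : x ≤ 2 * Real.pi * ((k + j : ℤ) : ℝ) + ℓ := by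
      have h2 := hy.2
      rw [hk] at h2
      push_cast; rw [hj]; linarith
    have h2 : 2 * Real.pi - L ≤ x := by linarith [hx.1]
    nlinarith
  · have h1 : (1 : ℝ) ≤ ((k + j : ℤ) : ℝ) := by exact_mod_cast h
    have h2 : 2 * Real.pi * ((k + j : ℤ) : ℝ) ≤ x := by
      have h2 := hy.1
      rw [hk] at h2
      push_cast; rw [hj]; linarith
    have h3 : x = 2 * Real.pi := le_antisymm (by linarith [hx.2]) (by nlinarith)
    rw [← hxz, h3]; exact e_two_pi

lemma left_null {L θ ℓ : ℝ} (hL : L < Real.pi)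
    (hℓ : ℓ < Real.pi) (hθ : ∃ k : ℤ, θ + ℓ = 2 * Real.pi * k) :
    circleArc 0 L ∩ circleArc θ ℓ ⊆ {1} := by
  rintro z ⟨⟨x, hx, hxz⟩, ⟨y, hy, hyz⟩⟩
  obtain ⟨j, hj⟩ := expi_eq_iff.mp (hxz.trans hyz.symm)
  obtain ⟨k, hk⟩ := hθ
  have hπ := Real.pi_pos
  simp only [zero_add] at hx
  rcases le_or_gt (k + j) 0 with h | h
  · have h0 : ((k + j : ℤ) : ℝ) ≤ 0 := by exact_mod_cast h
    have h1 : x ≤ 2 * Real.pi * ((k + j : ℤ) : ℝ) := by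
      have h2 := hy.2
      rw [hk] at h2
      push_cast; rw [hj]; linarith
    have h3 : x = 0 := le_antisymm (by nlinarith) hx.1
    rw [← hxz, h3]; exact e_zero
  · exfalso
    have h1 : (1 : ℝ) ≤ ((k + j : ℤ) : ℝ) := by exact_mod_cast h
    have h2 : 2 * Real.pi * ((k + j : ℤ) : ℝ) - ℓ ≤ x := by
      have h2 := hy.1
      push_cast; rw [hj]; linarith
    nlinarith [hx.2]

def cantorU (l : ℕ → ℝ) (m : ℕ) : Set ℂ :=
  ⋃ (s : List Bool) (_ : s.length = m), cantorArc l s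

section meas

variable {l : ℕ → ℝ} (hlpos : ∀ n, 0 < l n) (hl : ∀ n, l (n + 1) < l n / 2)
  (hl0 : l 0 ≤ 2 * Real.pi) (σ : Measure ℂ) [IsProbabilityMeasure σ]
  (hσ : ∀ s : List Bool, σ (cantorArc l s) = ENNReal.ofReal ((1 / 2 : ℝ) ^ s.length))

include hlpos hl hl0 hσ

lemma sigma_one : σ {(1 : ℂ)} = 0 := by
  have hb : ∀ n : ℕ, σ {(1 : ℂ)} ≤ ENNReal.ofReal ((1 / 2 : ℝ) ^ n) := by
    intro n
    have h1 : ({(1 : ℂ)} : Set ℂ) ⊆ cantorArc l (List.replicate n false) :=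
      singleton_subset_iff.mpr (one_mem_leftmost hlpos hl hl0 n)
    calc σ {(1 : ℂ)} ≤ σ (cantorArc l (List.replicate n false)) := measure_mono h1
      _ = ENNReal.ofReal ((1 / 2 : ℝ) ^ n) := by rw [hσ]; simp
  have htend : Filter.Tendsto (fun n : ℕ => ENNReal.ofReal ((1 / 2 : ℝ) ^ n))
      Filter.atTop (nhds 0) := by
    rw [show (0 : ENNReal) = ENNReal.ofReal 0 by simp]
    exact (ENNReal.tendsto_ofReal
      (tendsto_pow_atTop_nhds_zero_of_lt_one (by norm_num) (by norm_num)))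
  exact nonpos_iff_eq_zero.mp (ge_of_tendsto' htend hb)

lemma sigma_inter_null {s t : List Bool} (hlen : s.length = t.length) (hne : s ≠ t) :
    σ (cantorArc l s ∩ cantorArc l t) = 0 :=
  measure_mono_null (cantorArc_inter_subset hlpos hl hl0 hlen hne)
    (sigma_one hlpos hl hl0 σ hσ)

lemma sigma_diff_null (s : List Bool) :
    σ (cantorArc l s \ (cantorArc l (false :: s) ∪ cantorArc l (true :: s))) = 0 := by
  set c1 := cantorArc l (false :: s)
  set c2 := cantorArc l (true :: s)
  have hmeas : MeasurableSet c2 := circleArc_measurable _ _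
  have hint : σ (c1 ∩ c2) = 0 :=
    sigma_inter_null hlpos hl hl0 σ hσ (by simp) (by simp)
  have hu : σ (c1 ∪ c2) = σ (cantorArc l s) := by
    have := measure_union_add_inter c1 hmeas (μ := σ)
    rw [hint, add_zero] at this
    rw [this, hσ, hσ, hσ, ← ENNReal.ofReal_add (by positivity) (by positivity)]
    congr 1
    simp only [List.length_cons]
    ring
  have hsub : c1 ∪ c2 ⊆ cantorArc l s :=
    union_subset (cantorArc_child_subset hlpos hl hl0 false s)
      (cantorArc_child_subset hlpos hl hl0 true s)
  rw [measure_diff hsub (((circleArc_measurable _ _).union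
      (circleArc_measurable _ _))).nullMeasurableSet (measure_ne_top σ _), hu, tsub_self]

lemma cantorU_measurable (m : ℕ) : MeasurableSet (cantorU l m) :=
  MeasurableSet.iUnion fun _ => MeasurableSet.iUnion fun _ => circleArc_measurable _ _

lemma sigma_U (m : ℕ) : σ (cantorU l m) = 1 := by
  refine le_antisymm prob_le_one ?_
  induction m with
  | zero =>
    have h : cantorArc l [] ⊆ cantorU l 0 := by
      intro x hx
      exact mem_iUnion₂.mpr ⟨[], rfl, hx⟩
    calc (1 : ENNReal) = σ (cantorArc l []) := by rw [hσ]; simp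
      _ ≤ σ (cantorU l 0) := measure_mono h
  | succ n ih =>
    set N : Set ℂ := ⋃ s : List Bool,
      (cantorArc l s \ (cantorArc l (false :: s) ∪ cantorArc l (true :: s))) with hN
    have hNnull : σ N = 0 :=
      measure_iUnion_null fun s => sigma_diff_null hlpos hl hl0 σ hσ s
    have hsub : cantorU l n ⊆ cantorU l (n + 1) ∪ N := by
      intro x hx
      obtain ⟨s, hs, hxs⟩ := mem_iUnion₂.mp hx
      by_cases hx1 : x ∈ cantorArc l (false :: s) ∪ cantorArc l (true :: s)
      · left
        rcases hx1 with h | h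
        · exact mem_iUnion₂.mpr ⟨false :: s, by simp [hs], h⟩
        · exact mem_iUnion₂.mpr ⟨true :: s, by simp [hs], h⟩
      · right
        exact mem_iUnion.mpr ⟨s, hxs, hx1⟩
    calc (1 : ENNReal) ≤ σ (cantorU l n) := ih
      _ ≤ σ (cantorU l (n + 1) ∪ N) := measure_mono hsub
      _ ≤ σ (cantorU l (n + 1)) + σ N := measure_union_le _ _
      _ = σ (cantorU l (n + 1)) := by rw [hNnull, add_zero]

lemma sigma_U_compl (m : ℕ) : σ (cantorU l m)ᶜ = 0 := by
  rw [measure_compl (cantorU_measurable hlpos hl hl0 σ hσ m) (measure_ne_top σ _),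
    sigma_U hlpos hl hl0 σ hσ m, measure_univ, tsub_self]

end meas

theorem statement14 (l : ℕ → ℝ) (hlpos : ∀ n, 0 < l n)
    (hl : ∀ n, l (n + 1) < l n / 2) (hl0 : l 0 ≤ 2 * Real.pi)
    (σ : Measure ℂ) [IsProbabilityMeasure σ]
    (hσ : ∀ s : List Bool, σ (cantorArc l s) = ENNReal.ofReal ((1 / 2 : ℝ) ^ s.length))
    (φ : ℝ → ℝ)
    (hφmono : ∀ x y : ℝ, 0 < x → x ≤ y → y ≤ l 0 → φ x ≤ φ y)
    (hφl : ∀ n, φ (l n) = (1 / 2 : ℝ) ^ n) :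
    ∀ θ ℓ : ℝ, 0 < ℓ → ℓ < l 0 → σ (circleArc θ ℓ) ≤ ENNReal.ofReal (4 * φ ℓ) := by
  intro θ ℓ hℓ hℓ0
  have hπ := Real.pi_pos
  -- find the first index n with l n ≤ ℓ
  have hex : ∃ n, l n ≤ ℓ := by
    have hpow : ∀ n, l n ≤ l 0 * (1 / 2 : ℝ) ^ n := by
      intro n
      induction n with
      | zero => simp
      | succ n ih =>
        have h1 := hl n
        rw [pow_succ]
        nlinarith [hlpos n]
    obtain ⟨n, hn⟩ := exists_pow_lt_of_lt_one (div_pos hℓ (hlpos 0)) (by norm_num : (1/2:ℝ) < 1)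
    refine ⟨n, le_trans (hpow n) ?_⟩
    have h2 := (lt_div_iff₀ (hlpos 0)).mp hn
    nlinarith
  have hnspec := Nat.find_spec hex
  have hnmin : ∀ k < Nat.find hex, ℓ < l k := fun k hk => lt_of_not_ge (Nat.find_min hex hk)
  have hn0 : Nat.find hex ≠ 0 := by
    intro h
    rw [h] at hnspec
    linarith
  obtain ⟨m, hm⟩ : ∃ m, Nat.find hex = m + 1 := ⟨Nat.find hex - 1, by omega⟩
  rw [hm] at hnspec hnmin
  have hφn : (1 / 2 : ℝ) ^ (m + 1) ≤ φ ℓ := by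
    rw [← hφl (m + 1)]
    exact hφmono _ _ (hlpos _) hnspec hℓ0.le
  have key : σ (circleArc θ ℓ) ≤ ENNReal.ofReal (2 * (1 / 2 : ℝ) ^ m) := by
    rcases Nat.eq_zero_or_pos m with hm0 | hm1
    · subst hm0
      refine le_trans prob_le_one ?_
      simp only [pow_zero, mul_one]
      exact ENNReal.one_le_ofReal.mpr (by norm_num)
    · -- main case
      have hℓm : ℓ < l m := hnmin m (by omega)
      have hmπ : l m < Real.pi := by
        have h1 : l m ≤ l 1 := l_anti hlpos hl hm1
        have h2 := hl 0
        linarith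
      have hℓπ : ℓ < Real.pi := hℓm.trans hmπ
      set P₁ : List Bool → Prop := fun s => s.length = m ∧
        Complex.exp ((θ : ℝ) * Complex.I) ∈ cantorArc l s ∧
        ¬ (cantorArc l s ∩ circleArc θ ℓ ⊆ {1}) with hP₁
      set P₂ : List Bool → Prop := fun s => s.length = m ∧
        Complex.exp ((θ + ℓ : ℝ) * Complex.I) ∈ cantorArc l s ∧
        ¬ (cantorArc l s ∩ circleArc θ ℓ ⊆ {1}) with hP₂
      set C₁ : Set ℂ := ⋃ (s : List Bool) (_ : P₁ s), cantorArc l s with hC₁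
      set C₂ : Set ℂ := ⋃ (s : List Bool) (_ : P₂ s), cantorArc l s with hC₂
      have huniq1 : ∀ s t, P₁ s → P₁ t → s = t := by
        rintro s t ⟨hs1, hs2, hs3⟩ ⟨ht1, ht2, ht3⟩
        by_contra hne
        have hone : Complex.exp ((θ : ℝ) * Complex.I) = 1 :=
          cantorArc_inter_subset hlpos hl hl0 (hs1.trans ht1.symm) hne ⟨hs2, ht2⟩
        have hθk : ∃ k : ℤ, θ = 2 * Real.pi * k := by
          obtain ⟨k, hk⟩ := expi_eq_iff.mp (hone.trans e_zero.symm)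
          exact ⟨k, by linarith⟩
        have h1s : (1 : ℂ) ∈ cantorArc l s := hone ▸ hs2
        have h1t : (1 : ℂ) ∈ cantorArc l t := hone ▸ ht2
        rcases one_mem_classify hlpos hl hl0 h1s with hcs | hcs <;>
          rcases one_mem_classify hlpos hl hl0 h1t with hct | hct
        · rcases cantor_sep hlpos hl s t (hs1.trans ht1.symm) hne with h | h <;>
            rw [hcs, hct] at * <;> linarith [hlpos s.length, hlpos t.length]
        · exact ht3 (right_null hct (by rw [ht1]; exact hmπ) hℓπ hθk)
        · exact hs3 (right_null hcs (by rw [hs1]; exact hmπ) hℓπ hθk)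
        · rcases cantor_sep hlpos hl s t (hs1.trans ht1.symm) hne with h | h <;>
            rw [hs1, ht1] at * <;> linarith [hlpos m]
      have huniq2 : ∀ s t, P₂ s → P₂ t → s = t := by
        rintro s t ⟨hs1, hs2, hs3⟩ ⟨ht1, ht2, ht3⟩
        by_contra hne
        have hone : Complex.exp ((θ + ℓ : ℝ) * Complex.I) = 1 :=
          cantorArc_inter_subset hlpos hl hl0 (hs1.trans ht1.symm) hne ⟨hs2, ht2⟩
        have hθk : ∃ k : ℤ, θ + ℓ = 2 * Real.pi * k := by
          obtain ⟨k, hk⟩ := expi_eq_iff.mp (hone.trans e_zero.symm)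
          exact ⟨k, by linarith⟩
        have h1s : (1 : ℂ) ∈ cantorArc l s := hone ▸ hs2
        have h1t : (1 : ℂ) ∈ cantorArc l t := hone ▸ ht2
        rcases one_mem_classify hlpos hl hl0 h1s with hcs | hcs <;>
          rcases one_mem_classify hlpos hl hl0 h1t with hct | hct
        · rcases cantor_sep hlpos hl s t (hs1.trans ht1.symm) hne with h | h <;>
            rw [hcs, hct] at * <;> linarith [hlpos s.length, hlpos t.length]
        · exact hs3 (by
            have := left_null (L := l s.length) (by rw [hs1]; exact hmπ) hℓπ hθk
            rw [← hcs] at this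
            exact this)
        · exact ht3 (by
            have := left_null (L := l t.length) (by rw [ht1]; exact hmπ) hℓπ hθk
            rw [← hct] at this
            exact this)
        · rcases cantor_sep hlpos hl s t (hs1.trans ht1.symm) hne with h | h <;>
            rw [hs1, ht1] at * <;> linarith [hlpos m]
      have hcover : circleArc θ ℓ ∩ cantorU l m ⊆ C₁ ∪ C₂ ∪ {1} := by
        rintro x ⟨hxI, hxU⟩
        obtain ⟨s, hsl, hxs⟩ := mem_iUnion₂.mp hxU
        by_cases hsub : cantorArc l s ∩ circleArc θ ℓ ⊆ {1}
        · exact Or.inr (hsub ⟨hxs, hxI⟩)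
        · have hanc := arc_anchor (a := cantorLeft l s) (L := l s.length)
            (by rw [hsl]; exact hℓm.le) ⟨x, hxs, hxI⟩
          rcases hanc with h | h
          · exact Or.inl (Or.inl (mem_iUnion₂.mpr ⟨s, ⟨hsl, h, hsub⟩, hxs⟩))
          · exact Or.inl (Or.inr (mem_iUnion₂.mpr ⟨s, ⟨hsl, h, hsub⟩, hxs⟩))
      have hC1 : σ C₁ ≤ ENNReal.ofReal ((1 / 2 : ℝ) ^ m) := by
        by_cases hex1 : ∃ s, P₁ s
        · obtain ⟨s₀, hs₀⟩ := hex1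
          have hsub : C₁ ⊆ cantorArc l s₀ := iUnion₂_subset fun s hs => by
            rw [huniq1 s s₀ hs hs₀]
          refine le_trans (measure_mono hsub) ?_
          rw [hσ, hs₀.1]
        · have hem : C₁ ⊆ (∅ : Set ℂ) := iUnion₂_subset fun s hs => absurd ⟨s, hs⟩ hex1
          refine le_trans (measure_mono hem) ?_
          simp
      have hC2 : σ C₂ ≤ ENNReal.ofReal ((1 / 2 : ℝ) ^ m) := by
        by_cases hex2 : ∃ s, P₂ s
        · obtain ⟨s₀, hs₀⟩ := hex2
          have hsub : C₂ ⊆ cantorArc l s₀ := iUnion₂_subset fun s hs => by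
            rw [huniq2 s s₀ hs hs₀]
          refine le_trans (measure_mono hsub) ?_
          rw [hσ, hs₀.1]
        · have hem : C₂ ⊆ (∅ : Set ℂ) := iUnion₂_subset fun s hs => absurd ⟨s, hs⟩ hex2
          refine le_trans (measure_mono hem) ?_
          simp
      calc σ (circleArc θ ℓ)
          ≤ σ ((circleArc θ ℓ ∩ cantorU l m) ∪ (cantorU l m)ᶜ) := by
            refine measure_mono ?_
            intro x hx
            by_cases h : x ∈ cantorU l m
            · exact Or.inl ⟨hx, h⟩
            · exact Or.inr h
        _ ≤ σ (circleArc θ ℓ ∩ cantorU l m) + σ (cantorU l m)ᶜ := measure_union_le _ _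
        _ = σ (circleArc θ ℓ ∩ cantorU l m) := by
            rw [sigma_U_compl hlpos hl hl0 σ hσ m, add_zero]
        _ ≤ σ (C₁ ∪ C₂ ∪ {1}) := measure_mono hcover
        _ ≤ σ (C₁ ∪ C₂) + σ {1} := measure_union_le _ _
        _ = σ (C₁ ∪ C₂) := by rw [sigma_one hlpos hl hl0 σ hσ, add_zero]
        _ ≤ σ C₁ + σ C₂ := measure_union_le _ _
        _ ≤ ENNReal.ofReal ((1 / 2 : ℝ) ^ m) + ENNReal.ofReal ((1 / 2 : ℝ) ^ m) :=
            add_le_add hC1 hC2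
        _ = ENNReal.ofReal (2 * (1 / 2 : ℝ) ^ m) := by
            rw [← ENNReal.ofReal_add (by positivity) (by positivity)]
            ring_nf
  refine le_trans key (ENNReal.ofReal_le_ofReal ?_)
  have : (2 : ℝ) * (1 / 2) ^ m = 4 * (1 / 2) ^ (m + 1) := by ring
  rw [this]
  linarith

end
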